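/- Let α, α' ∈ (0,1), ρ > 0, and let P be a probability distribution on ℝ with finite first moment that is absolutely continuous with respect to Lebesgue measure with density bounded above by ρ. Suppose a ∈ ℝ satisfies P{y : y ≤ a} = 1−α' and Δ ∈ ℝ is such that b := a + Δ satisfies P{y : y ≤ b} = 1−α. Then E_{y∼P}[PB_{1−α}(a, y)] − E_{y∼P}[PB_{1−α}(b, y)] ≥ (α − α')² / (2ρ). -/

import Mathlib

open MeasureTheory Set

/-- Pinball loss at quantile level `1 - α`. -/
noncomputable def pinball (α : ℝ) (yhat y : ℝ) : ℝ :=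
  max (α * (yhat - y)) ((1 - α) * (y - yhat))

lemma pinball_eq {α : ℝ} (hα : α ∈ Set.Ioo (0 : ℝ) 1) (c y : ℝ) :
    pinball α c y = (1 - α) * (y - c) + max (c - y) 0 := by
  obtain ⟨h0, h1⟩ := hα
  unfold pinball
  rcases le_total y c with h | h
  · rw [max_eq_left (by nlinarith), max_eq_left (by linarith)]; ring
  · rw [max_eq_right (by nlinarith), max_eq_right (by linarith)]; ring

lemma integrable_pinball {α : ℝ} (hα : α ∈ Set.Ioo (0 : ℝ) 1) (c : ℝ)
    (P : Measure ℝ) [IsProbabilityMeasure P]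
    (hmom : Integrable (fun y : ℝ => y) P) :
    Integrable (fun y => pinball α c y) P := by
  obtain ⟨h0, h1⟩ := hα
  have hcont : Continuous fun y => pinball α c y := by
    unfold pinball; fun_prop
  refine (hmom.abs.add (integrable_const |c|)).mono' hcont.aestronglyMeasurable ?_
  filter_upwards with y
  simp only [Real.norm_eq_abs]
  unfold pinball
  refine le_trans abs_max_le_max_abs_abs (max_le ?_ ?_)
  · rw [abs_mul]
    have h2 : |c - y| ≤ |y| + |c| := by
      calc |c - y| ≤ |c| + |y| := abs_sub c y
        _ = |y| + |c| := by ring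
    calc |α| * |c - y| ≤ 1 * |c - y| := by
          apply mul_le_mul_of_nonneg_right _ (abs_nonneg _)
          rw [abs_of_pos h0]; linarith
      _ = |c - y| := one_mul _
      _ ≤ |y| + |c| := h2
  · rw [abs_mul]
    have h2 : |y - c| ≤ |y| + |c| := abs_sub y c
    calc |1 - α| * |y - c| ≤ 1 * |y - c| := by
          apply mul_le_mul_of_nonneg_right _ (abs_nonneg _)
          rw [abs_of_pos (by linarith)]; linarith
      _ = |y - c| := one_mul _
      _ ≤ |y| + |c| := h2

lemma integrable_maxpart (c : ℝ) (P : Measure ℝ) [IsProbabilityMeasure P]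
    (hmom : Integrable (fun y : ℝ => y) P) :
    Integrable (fun y => max (c - y) 0) P := by
  have hcont : Continuous fun y : ℝ => max (c - y) 0 := by fun_prop
  refine (hmom.abs.add (integrable_const |c|)).mono' hcont.aestronglyMeasurable ?_
  filter_upwards with y
  simp only [Real.norm_eq_abs]
  refine le_trans abs_max_le_max_abs_abs (max_le ?_ (by rw [abs_zero]; exact add_nonneg (abs_nonneg _) (abs_nonneg _)))
  calc |c - y| ≤ |c| + |y| := abs_sub c y
    _ = |y| + |c| := by ring

lemma maxdiff_eq {u v : ℝ} (huv : u ≤ v) (y : ℝ) :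
    max (v - y) 0 - max (u - y) 0
      = ∫ t in Ioc u v, (if y ≤ t then (1 : ℝ) else 0) := by
  have hind : ∀ t : ℝ, (if y ≤ t then (1 : ℝ) else 0)
      = (Ici y).indicator (fun _ => (1 : ℝ)) t := by
    intro t; simp [indicator_apply]
  simp_rw [hind]
  rw [setIntegral_indicator measurableSet_Ici, setIntegral_const, smul_eq_mul, mul_one, measureReal_def]
  rcases le_or_gt y u with h | h
  · have hs : Ioc u v ∩ Ici y = Ioc u v :=
      inter_eq_left.2 fun t ht => le_trans h ht.1.le
    rw [hs, Real.volume_Ioc, max_eq_left (by linarith), max_eq_left (by linarith),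
      ENNReal.toReal_ofReal (by linarith)]
    ring
  · rcases le_or_gt y v with h2 | h2
    · have hs : Ioc u v ∩ Ici y = Icc y v := by
        ext t
        simp only [mem_inter_iff, mem_Ioc, mem_Ici, mem_Icc]
        constructor
        · rintro ⟨⟨_, ht2⟩, ht3⟩; exact ⟨ht3, ht2⟩
        · rintro ⟨ht3, ht2⟩; exact ⟨⟨lt_of_lt_of_le h ht3, ht2⟩, ht3⟩
      rw [hs, Real.volume_Icc, max_eq_left (by linarith), max_eq_right (by linarith),
        ENNReal.toReal_ofReal (by linarith)]
      ring
    · have hs : Ioc u v ∩ Ici y = ∅ := by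
        ext t
        simp only [mem_inter_iff, mem_Ioc, mem_Ici, mem_empty_iff_false, iff_false]
        rintro ⟨⟨_, ht2⟩, ht3⟩; linarith
      rw [hs, measure_empty, max_eq_right (by linarith), max_eq_right (by linarith)]
      simp

lemma fubini_step (P : Measure ℝ) [IsProbabilityMeasure P] (u v : ℝ) :
    ∫ y, (∫ t in Ioc u v, (if y ≤ t then (1 : ℝ) else 0)) ∂P
      = ∫ t in Ioc u v, (P (Iic t)).toReal := by
  haveI : IsFiniteMeasure ((volume : Measure ℝ).restrict (Ioc u v)) := by
    constructor
    rw [Measure.restrict_apply_univ, Real.volume_Ioc]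
    exact ENNReal.ofReal_lt_top
  have hmeas : MeasurableSet {p : ℝ × ℝ | p.1 ≤ p.2} :=
    measurableSet_le measurable_fst measurable_snd
  have hint : Integrable (fun p : ℝ × ℝ => if p.1 ≤ p.2 then (1 : ℝ) else 0)
      (P.prod ((volume : Measure ℝ).restrict (Ioc u v))) := by
    have heq : (fun p : ℝ × ℝ => if p.1 ≤ p.2 then (1 : ℝ) else 0)
        = {p : ℝ × ℝ | p.1 ≤ p.2}.indicator (fun _ => (1 : ℝ)) := by
      ext p; simp [indicator_apply]
    rw [heq]
    exact (integrable_const (1 : ℝ)).indicator hmeas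
  have hswap := MeasureTheory.integral_integral_swap
    (f := fun y t => if y ≤ t then (1 : ℝ) else 0) hint
  rw [hswap]
  have hinner : ∀ t : ℝ, ∫ y, (if y ≤ t then (1 : ℝ) else 0) ∂P
      = (P (Iic t)).toReal := by
    intro t
    have heq : (fun y : ℝ => if y ≤ t then (1 : ℝ) else 0)
        = (Iic t).indicator (fun _ => (1 : ℝ)) := by
      ext y; simp [indicator_apply, mem_Iic]
    rw [heq, integral_indicator_const (1 : ℝ) measurableSet_Iic, smul_eq_mul, mul_one]; rfl
  simp_rw [hinner]

lemma expected_diff {α : ℝ} (hα : α ∈ Set.Ioo (0 : ℝ) 1)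
    (P : Measure ℝ) [IsProbabilityMeasure P]
    (hmom : Integrable (fun y : ℝ => y) P) {u v : ℝ} (huv : u ≤ v) :
    (∫ y, pinball α u y ∂P) - (∫ y, pinball α v y ∂P)
      = (1 - α) * (v - u) - ∫ t in Ioc u v, (P (Iic t)).toReal := by
  have hiu := integrable_pinball hα u P hmom
  have hiv := integrable_pinball hα v P hmom
  have hmd : Integrable (fun y => max (v - y) 0 - max (u - y) 0) P :=
    (integrable_maxpart v P hmom).sub (integrable_maxpart u P hmom)
  rw [← integral_sub hiu hiv]
  have hpt : (fun y => pinball α u y - pinball α v y)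
      = fun y => (1 - α) * (v - u) - (max (v - y) 0 - max (u - y) 0) := by
    ext y; rw [pinball_eq hα, pinball_eq hα]; ring
  rw [hpt, integral_sub (integrable_const _) hmd, integral_const, measureReal_def, measure_univ,
    ENNReal.toReal_one, one_smul]
  congr 1
  have : (fun y => max (v - y) 0 - max (u - y) 0)
      = fun y => ∫ t in Ioc u v, (if y ≤ t then (1 : ℝ) else 0) := by
    ext y; exact maxdiff_eq huv y
  rw [this, fubini_step]

lemma F_lipschitz {P : Measure ℝ} [IsProbabilityMeasure P] {ρ : ℝ} (hρ : 0 < ρ)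
    (hac : P ≪ (volume : Measure ℝ))
    (hdens : ∀ᵐ x ∂(volume : Measure ℝ), P.rnDeriv volume x ≤ ENNReal.ofReal ρ)
    {s t : ℝ} (hst : s ≤ t) :
    (P (Iic t)).toReal - (P (Iic s)).toReal ≤ ρ * (t - s) := by
  have hsplit : P (Iic t) = P (Iic s) + P (Ioc s t) := by
    rw [← Iic_union_Ioc_eq_Iic hst, measure_union (Iic_disjoint_Ioc le_rfl) measurableSet_Ioc]
  have hIoc : P (Ioc s t) ≤ ENNReal.ofReal (ρ * (t - s)) := by
    rw [← Measure.setLIntegral_rnDeriv hac (Ioc s t)]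
    calc ∫⁻ x in Ioc s t, P.rnDeriv volume x ∂volume
        ≤ ∫⁻ _ in Ioc s t, ENNReal.ofReal ρ ∂volume :=
          lintegral_mono_ae (ae_restrict_of_ae hdens)
      _ = ENNReal.ofReal ρ * volume (Ioc s t) := by
          rw [lintegral_const, Measure.restrict_apply_univ]
      _ = ENNReal.ofReal (ρ * (t - s)) := by
          rw [Real.volume_Ioc, ← ENNReal.ofReal_mul hρ.le]
  have h2 : (P (Ioc s t)).toReal ≤ ρ * (t - s) :=
    ENNReal.toReal_le_of_le_ofReal (by nlinarith) hIoc
  rw [hsplit, ENNReal.toReal_add (measure_ne_top _ _) (measure_ne_top _ _)]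
  linarith

lemma F_monotone (P : Measure ℝ) [IsProbabilityMeasure P] :
    Monotone fun t : ℝ => (P (Iic t)).toReal := fun s t hst =>
  ENNReal.toReal_mono (measure_ne_top _ _) (measure_mono (Iic_subset_Iic.2 hst))

lemma linear_integral (c d u : ℝ) :
    ∫ t in u..(u + c), (d - t) = c * d - ((u + c) ^ 2 - u ^ 2) / 2 := by
  have h : IntervalIntegrable (fun t : ℝ => t) volume u (u + c) :=
    Continuous.intervalIntegrable (by fun_prop) _ _
  rw [intervalIntegral.integral_sub intervalIntegrable_const h,
    intervalIntegral.integral_const, integral_id]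
  simp only [smul_eq_mul]
  ring

lemma key_left {ρ δ u v : ℝ} (hρ : 0 < ρ) (hδ : 0 ≤ δ) (hr : u + δ / ρ ≤ v)
    {g : ℝ → ℝ} (hg_int : IntervalIntegrable g volume u v)
    (hg0 : ∀ t ∈ Icc u v, 0 ≤ g t)
    (hglin : ∀ t ∈ Icc u (u + δ / ρ), δ - ρ * (t - u) ≤ g t) :
    δ ^ 2 / (2 * ρ) ≤ ∫ t in u..v, g t := by
  set r := δ / ρ with hrdef
  have hr0 : 0 ≤ r := div_nonneg hδ hρ.le
  have huv : u ≤ v := le_trans (by linarith) hr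
  have h1 : IntervalIntegrable g volume u (u + r) := by
    refine hg_int.mono_set ?_
    rw [uIcc_of_le (by linarith), uIcc_of_le huv]
    exact Icc_subset_Icc le_rfl hr
  have h2 : IntervalIntegrable g volume (u + r) v := by
    refine hg_int.mono_set ?_
    rw [uIcc_of_le hr, uIcc_of_le huv]
    exact Icc_subset_Icc (by linarith) le_rfl
  have hsplit : ∫ t in u..v, g t = (∫ t in u..(u + r), g t) + ∫ t in (u + r)..v, g t :=
    (intervalIntegral.integral_add_adjacent_intervals h1 h2).symm
  have hpos : 0 ≤ ∫ t in (u + r)..v, g t :=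
    intervalIntegral.integral_nonneg hr fun x hx => hg0 x ⟨by linarith [hx.1], hx.2⟩
  have hlin_int : IntervalIntegrable (fun t => δ - ρ * (t - u)) volume u (u + r) :=
    (Continuous.intervalIntegrable (by fun_prop) _ _)
  have hmono := intervalIntegral.integral_mono_on (by linarith : u ≤ u + r)
    hlin_int h1 hglin
  have hcomp : (∫ t in u..(u + r), (δ - ρ * (t - u))) = δ ^ 2 / (2 * ρ) := by
    have heq : (fun t => δ - ρ * (t - u)) = fun t => ρ * ((δ / ρ + u) - t) := by
      ext t; field_simp; ring
    rw [heq, intervalIntegral.integral_const_mul, linear_integral]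
    rw [hrdef]
    field_simp
    ring
  rw [hsplit]
  rw [hcomp] at hmono
  linarith

lemma key_right {ρ δ u v : ℝ} (hρ : 0 < ρ) (hδ : 0 ≤ δ) (hr : u ≤ v - δ / ρ)
    {g : ℝ → ℝ} (hg_int : IntervalIntegrable g volume u v)
    (hg0 : ∀ t ∈ Icc u v, 0 ≤ g t)
    (hglin : ∀ t ∈ Icc (v - δ / ρ) v, δ - ρ * (v - t) ≤ g t) :
    δ ^ 2 / (2 * ρ) ≤ ∫ t in u..v, g t := by
  set r := δ / ρ with hrdef
  have hr0 : 0 ≤ r := div_nonneg hδ hρ.le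
  have huv : u ≤ v := le_trans hr (by linarith)
  have h1 : IntervalIntegrable g volume u (v - r) := by
    refine hg_int.mono_set ?_
    rw [uIcc_of_le hr, uIcc_of_le huv]
    exact Icc_subset_Icc le_rfl (by linarith)
  have h2 : IntervalIntegrable g volume (v - r) v := by
    refine hg_int.mono_set ?_
    rw [uIcc_of_le (by linarith), uIcc_of_le huv]
    exact Icc_subset_Icc hr le_rfl
  have hsplit : ∫ t in u..v, g t = (∫ t in u..(v - r), g t) + ∫ t in (v - r)..v, g t :=
    (intervalIntegral.integral_add_adjacent_intervals h1 h2).symm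
  have hpos : 0 ≤ ∫ t in u..(v - r), g t :=
    intervalIntegral.integral_nonneg hr fun x hx => hg0 x ⟨hx.1, by linarith [hx.2]⟩
  have hlin_int : IntervalIntegrable (fun t => δ - ρ * (v - t)) volume (v - r) v :=
    (Continuous.intervalIntegrable (by fun_prop) _ _)
  have hmono := intervalIntegral.integral_mono_on (by linarith : v - r ≤ v)
    hlin_int h2 hglin
  have hcomp : (∫ t in (v - r)..v, (δ - ρ * (v - t))) = δ ^ 2 / (2 * ρ) := by
    have heq : (fun t => δ - ρ * (v - t)) = fun t => (δ - ρ * v) + ρ * t := by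
      ext t; ring
    rw [heq, intervalIntegral.integral_add intervalIntegrable_const
      (Continuous.intervalIntegrable (by fun_prop) _ _),
      intervalIntegral.integral_const, intervalIntegral.integral_const_mul,
      integral_id]
    simp only [smul_eq_mul, hrdef]
    field_simp
    ring
  rw [hsplit]
  rw [hcomp] at hmono
  linarith

/-- quantitative shift lemma: for a probability measure `P` on `ℝ`
with finite first moment, absolutely continuous w.r.t. Lebesgue measure with
density bounded by `ρ`, if `P(-∞, a] = 1 - α'` and `b = a + Δ` satisfies
`P(-∞, b] = 1 - α`, then shifting from `a` to `b` decreases the expected pinball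
loss at level `1 - α` by at least `(α - α')² / (2ρ)`. -/
theorem quantitative_shift_lemma
    (α α' : ℝ) (hα : α ∈ Set.Ioo (0 : ℝ) 1) (hα' : α' ∈ Set.Ioo (0 : ℝ) 1)
    (ρ : ℝ) (hρ : 0 < ρ)
    (P : Measure ℝ) [IsProbabilityMeasure P]
    (hmom : Integrable (fun y : ℝ => y) P)
    (hac : P ≪ (volume : Measure ℝ))
    (hdens : ∀ᵐ x ∂(volume : Measure ℝ), P.rnDeriv volume x ≤ ENNReal.ofReal ρ)
    (a Δ : ℝ)
    (ha : (P (Iic a)).toReal = 1 - α')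
    (hb : (P (Iic (a + Δ))).toReal = 1 - α) :
    (∫ y, pinball α a y ∂P) - (∫ y, pinball α (a + Δ) y ∂P)
      ≥ (α - α') ^ 2 / (2 * ρ) := by
  set b := a + Δ with hbdef
  set F : ℝ → ℝ := fun t => (P (Iic t)).toReal with hFdef
  have hFa : F a = 1 - α' := ha
  have hFb : F b = 1 - α := hb
  have hmono : Monotone F := F_monotone P
  have hlip : ∀ s t : ℝ, s ≤ t → F t - F s ≤ ρ * (t - s) := fun s t hst =>
    F_lipschitz hρ hac hdens hst
  have hFint : ∀ u v : ℝ, IntervalIntegrable F volume u v :=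
    fun u v => hmono.intervalIntegrable
  rcases le_or_gt a b with hab | hab
  · -- a ≤ b, δ = α' - α ≥ 0
    have hδ0 : 0 ≤ α' - α := by
      have := hmono hab; rw [hFa, hFb] at this; linarith
    set δ := α' - α with hδdef
    have hδlip : δ ≤ ρ * (b - a) := by
      have := hlip a b hab; rw [hFa, hFb] at this; linarith
    have heq := expected_diff hα P hmom hab
    rw [heq]
    have hioc : (∫ t in Ioc a b, F t) = ∫ t in a..b, F t :=
      (intervalIntegral.integral_of_le hab).symm
    have hconst : (1 - α) * (b - a) = ∫ t in a..b, (1 - α) := by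
      rw [intervalIntegral.integral_const, smul_eq_mul]; ring
    rw [hioc, hconst, ← intervalIntegral.integral_sub intervalIntegrable_const (hFint a b)]
    have hsq : (α - α') ^ 2 = δ ^ 2 := by rw [hδdef]; ring
    rw [ge_iff_le, hsq]
    refine key_left hρ hδ0 ?_ ((intervalIntegrable_const).sub (hFint a b)) ?_ ?_
    · have hd : δ / ρ ≤ b - a := by rw [div_le_iff₀ hρ]; nlinarith [hδlip]
      linarith
    · intro t ht
      have := hmono ht.2
      rw [hFb] at this
      linarith
    · intro t ht
      have h1 := hlip a t ht.1
      rw [hFa] at h1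
      linarith
  · -- b < a, δ = α - α' ≥ 0
    have hba : b ≤ a := hab.le
    have hδ0 : 0 ≤ α - α' := by
      have := hmono hba; rw [hFa, hFb] at this; linarith
    set δ := α - α' with hδdef
    have hδlip : δ ≤ ρ * (a - b) := by
      have := hlip b a hba; rw [hFa, hFb] at this; linarith
    have heq := expected_diff hα P hmom hba
    have heq' : (∫ y, pinball α a y ∂P) - (∫ y, pinball α b y ∂P)
        = (∫ t in Ioc b a, F t) - (1 - α) * (a - b) := by linarith [heq]
    rw [heq']
    have hioc : (∫ t in Ioc b a, F t) = ∫ t in b..a, F t :=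
      (intervalIntegral.integral_of_le hba).symm
    have hconst : (1 - α) * (a - b) = ∫ t in b..a, (1 - α) := by
      rw [intervalIntegral.integral_const, smul_eq_mul]; ring
    rw [hioc, hconst, ← intervalIntegral.integral_sub (hFint b a) intervalIntegrable_const]
    have hsq : (α - α') ^ 2 = δ ^ 2 := by rw [hδdef]
    rw [ge_iff_le, hsq]
    refine key_right hρ hδ0 ?_ ((hFint b a).sub intervalIntegrable_const) ?_ ?_
    · have hd : δ / ρ ≤ a - b := by rw [div_le_iff₀ hρ]; nlinarith [hδlip]
      linarith
    · intro t ht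
      have := hmono ht.1
      rw [hFb] at this
      linarith
    · intro t ht
      have h1 := hlip t a ht.2
      rw [hFa] at h1
      linarith
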